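/- Let H be a locally semicomplete digraph with no symmetric arcs, let C: v_1→v_2→…→v_k→v_1 (k ≥ 3) be an induced directed cycle of H, and let x be a vertex of H not on C such that v_1→x and v_k does not dominate x. Then H contains an induced subdigraph isomorphic to H1(m), to H2(m), or to the converse of H2(m), for some integer m with 3 ≤ m ≤ k. -/

import Mathlib

/-- Arc relation of the digraph `H1(m)` on vertices `{1, …, m+1} ⊆ ℕ`: the directed
cycle `1 → 2 → … → m → 1` together with the arcs `m → m+1` and `m+1 → 1`. -/
def H1Arc (m : ℕ) : ℕ → ℕ → Prop := fun a b =>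
  (1 ≤ a ∧ a < m ∧ b = a + 1) ∨ (a = m ∧ b = 1) ∨ (a = m ∧ b = m + 1) ∨ (a = m + 1 ∧ b = 1)

/-- Arc relation of the digraph `H2(m)` on vertices `{1, …, m+1} ⊆ ℕ`: the directed
cycle `1 → 2 → … → m → 1` together with the arcs `m → m+1`, `m+1 → 1` and `m+1 → 2`. -/
def H2Arc (m : ℕ) : ℕ → ℕ → Prop := fun a b =>
  (1 ≤ a ∧ a < m ∧ b = a + 1) ∨ (a = m ∧ b = 1) ∨ (a = m ∧ b = m + 1) ∨
    (a = m + 1 ∧ b = 1) ∨ (a = m + 1 ∧ b = 2)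

lemma vmk {n a : ℕ} (h : a < n) : ((⟨a, h⟩ : Fin n) : ℕ) = a := rfl

lemma fin_sub_val_le {k : ℕ} (a b : Fin k) (h : b.val ≤ a.val) :
    ((a - b : Fin k) : ℕ) = a.val - b.val := by
  have hk : 0 < k := a.pos
  have hb : b.val ≤ k := le_of_lt b.isLt
  rw [Fin.sub_def]
  show (k - b.val + a.val) % k = _
  have : k - b.val + a.val = k + (a.val - b.val) := by omega
  rw [this, Nat.add_mod_left, Nat.mod_eq_of_lt (by omega)]

lemma fin_sub_val_lt {k : ℕ} (a b : Fin k) (h : a.val < b.val) :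
    ((a - b : Fin k) : ℕ) = a.val + k - b.val := by
  have hk : 0 < k := a.pos
  have hb : b.val < k := b.isLt
  rw [Fin.sub_def]
  show (k - b.val + a.val) % k = _
  rw [Nat.mod_eq_of_lt (by omega)]
  omega

lemma fin_succ_iff {m : ℕ} [NeZero m] (hm : 2 ≤ m) (i j : Fin m) :
    j = i + 1 ↔ (((i : ℕ) + 1 = m ∧ (j : ℕ) = 0) ∨ ((j : ℕ) = (i : ℕ) + 1)) := by
  rw [Fin.ext_iff, Fin.add_def, Fin.val_one' m]
  show (j : ℕ) = ((i : ℕ) + 1 % m) % m ↔ _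
  rw [Nat.mod_eq_of_lt (show 1 < m by omega)]
  have hi := i.isLt
  have hj := j.isLt
  rcases Nat.lt_or_ge ((i:ℕ)+1) m with h | h
  · rw [Nat.mod_eq_of_lt h]; omega
  · have he : (i:ℕ) + 1 = m := by omega
    rw [he, Nat.mod_self]; omega

lemma aux1 {G : Type} [AddCommGroup G] (c i j o : G) : c - i = c - j + o ↔ j = i + o := by
  rw [sub_add, sub_right_inj, eq_sub_iff_add_eq, eq_comm]

lemma aux2 {G : Type} [AddCommGroup G] (i j o : G) : j - o = i - o + o ↔ j = i + o := by
  rw [sub_add_cancel, sub_eq_iff_eq_add]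

section
variable {V : Type} (A : V → V → Prop)

lemma gen_H1 (m : ℕ) [NeZero m] (hm : 3 ≤ m) (z : Fin m → V) (y : V)
    (hzinj : Function.Injective z) (hy : ∀ i, z i ≠ y)
    (hcyc : ∀ i j : Fin m, A (z i) (z j) ↔ j = i + 1)
    (h1 : A y (z ⟨0, by omega⟩))
    (h2 : A (z ⟨m - 1, Nat.sub_lt (by omega) one_pos⟩) y)
    (h3 : ∀ i : Fin m, (i : ℕ) ≠ 0 → ¬ A y (z i))
    (h4 : ∀ i : Fin m, (i : ℕ) ≠ m - 1 → ¬ A (z i) y)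
    (hyy : ¬ A y y) :
    ∃ φ : Fin (m + 1) → V, Function.Injective φ ∧
      (∀ p q : Fin (m + 1), H1Arc m ((p : ℕ) + 1) ((q : ℕ) + 1) ↔ A (φ p) (φ q)) := by
  refine ⟨fun p => if h : (p : ℕ) < m then z ⟨p, h⟩ else y, ?_, ?_⟩
  · intro p q hpq
    dsimp only at hpq
    by_cases hp : (p : ℕ) < m <;> by_cases hq : (q : ℕ) < m
    · rw [dif_pos hp, dif_pos hq] at hpq
      have h' := congrArg Fin.val (hzinj hpq)
      exact Fin.ext h'
    · rw [dif_pos hp, dif_neg hq] at hpq; exact absurd hpq (hy _)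
    · rw [dif_neg hp, dif_pos hq] at hpq; exact absurd hpq.symm (hy _)
    · have := p.isLt; have := q.isLt; exact Fin.ext (by omega)
  · intro p q
    dsimp only
    have hpm := p.isLt; have hqm := q.isLt
    by_cases hp : (p : ℕ) < m <;> by_cases hq : (q : ℕ) < m
    · rw [dif_pos hp, dif_pos hq, hcyc, fin_succ_iff (by omega)]
      show H1Arc m _ _ ↔ ((p:ℕ) + 1 = m ∧ (q:ℕ) = 0) ∨ ((q:ℕ) = (p:ℕ) + 1)
      unfold H1Arc; omega
    · rw [dif_pos hp, dif_neg hq]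
      have hqv : (q : ℕ) = m := by omega
      have hR : A (z ⟨(p:ℕ), hp⟩) y ↔ (p : ℕ) = m - 1 := by
        constructor
        · intro h; by_contra hne; exact h4 _ hne h
        · intro h
          have he : (⟨(p:ℕ), hp⟩ : Fin m) = ⟨m - 1, by omega⟩ := Fin.ext h
          rw [he]; exact h2
      rw [hR]; unfold H1Arc; omega
    · rw [dif_neg hp, dif_pos hq]
      have hpv : (p : ℕ) = m := by omega
      have hR : A y (z ⟨(q:ℕ), hq⟩) ↔ (q : ℕ) = 0 := by
        constructor
        · intro h; by_contra hne; exact h3 _ hne h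
        · intro h
          have he : (⟨(q:ℕ), hq⟩ : Fin m) = ⟨0, by omega⟩ := Fin.ext h
          rw [he]; exact h1
      rw [hR]; unfold H1Arc; omega
    · rw [dif_neg hp, dif_neg hq]
      simp only [hyy, iff_false]
      unfold H1Arc; omega

lemma gen_H2 (m : ℕ) [NeZero m] (hm : 3 ≤ m) (z : Fin m → V) (y : V)
    (hzinj : Function.Injective z) (hy : ∀ i, z i ≠ y)
    (hcyc : ∀ i j : Fin m, A (z i) (z j) ↔ j = i + 1)
    (h1 : A y (z ⟨0, by omega⟩))
    (h1b : A y (z ⟨1, by omega⟩))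
    (h2 : A (z ⟨m - 1, Nat.sub_lt (by omega) one_pos⟩) y)
    (h3 : ∀ i : Fin m, (i : ℕ) ≠ 0 → (i : ℕ) ≠ 1 → ¬ A y (z i))
    (h4 : ∀ i : Fin m, (i : ℕ) ≠ m - 1 → ¬ A (z i) y)
    (hyy : ¬ A y y) :
    ∃ φ : Fin (m + 1) → V, Function.Injective φ ∧
      (∀ p q : Fin (m + 1), H2Arc m ((p : ℕ) + 1) ((q : ℕ) + 1) ↔ A (φ p) (φ q)) := by
  refine ⟨fun p => if h : (p : ℕ) < m then z ⟨p, h⟩ else y, ?_, ?_⟩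
  · intro p q hpq
    dsimp only at hpq
    by_cases hp : (p : ℕ) < m <;> by_cases hq : (q : ℕ) < m
    · rw [dif_pos hp, dif_pos hq] at hpq
      have h' := congrArg Fin.val (hzinj hpq)
      exact Fin.ext h'
    · rw [dif_pos hp, dif_neg hq] at hpq; exact absurd hpq (hy _)
    · rw [dif_neg hp, dif_pos hq] at hpq; exact absurd hpq.symm (hy _)
    · have := p.isLt; have := q.isLt; exact Fin.ext (by omega)
  · intro p q
    dsimp only
    have hpm := p.isLt; have hqm := q.isLt
    by_cases hp : (p : ℕ) < m <;> by_cases hq : (q : ℕ) < m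
    · rw [dif_pos hp, dif_pos hq, hcyc, fin_succ_iff (by omega)]
      show H2Arc m _ _ ↔ ((p:ℕ) + 1 = m ∧ (q:ℕ) = 0) ∨ ((q:ℕ) = (p:ℕ) + 1)
      unfold H2Arc; omega
    · rw [dif_pos hp, dif_neg hq]
      have hqv : (q : ℕ) = m := by omega
      have hR : A (z ⟨(p:ℕ), hp⟩) y ↔ (p : ℕ) = m - 1 := by
        constructor
        · intro h; by_contra hne; exact h4 _ hne h
        · intro h
          have he : (⟨(p:ℕ), hp⟩ : Fin m) = ⟨m - 1, by omega⟩ := Fin.ext h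
          rw [he]; exact h2
      rw [hR]; unfold H2Arc; omega
    · rw [dif_neg hp, dif_pos hq]
      have hpv : (p : ℕ) = m := by omega
      have hR : A y (z ⟨(q:ℕ), hq⟩) ↔ ((q : ℕ) = 0 ∨ (q : ℕ) = 1) := by
        constructor
        · intro h; by_contra hne; push_neg at hne; exact h3 _ hne.1 hne.2 h
        · rintro (h | h)
          · have he : (⟨(q:ℕ), hq⟩ : Fin m) = ⟨0, by omega⟩ := Fin.ext h
            rw [he]; exact h1
          · have he : (⟨(q:ℕ), hq⟩ : Fin m) = ⟨1, by omega⟩ := Fin.ext h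
            rw [he]; exact h1b
      rw [hR]; unfold H2Arc; omega
    · rw [dif_neg hp, dif_neg hq]
      simp only [hyy, iff_false]
      unfold H2Arc; omega

lemma core
    (hirr : ∀ v, ¬ A v v)
    (hloc_out : ∀ x y z : V, y ≠ z → A x y → A x z → (A y z ∨ A z y))
    (hloc_in : ∀ x y z : V, y ≠ z → A y x → A z x → (A y z ∨ A z y))
    (hasym : ∀ p q : V, A p q → ¬ A q p)
    (k : ℕ) [NeZero k] (hk : 3 ≤ k) (u : Fin k → V) (huinj : Function.Injective u)
    (hind : ∀ i j : Fin k, A (u i) (u j) ↔ j = i + 1)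
    (x : V) (hux : ∀ i : Fin k, u i ≠ x)
    (δ : Fin k) (hδ1 : 1 ≤ (δ : ℕ))
    (hx0 : A x (u 0)) (hxδ : A (u δ) x)
    (hmin : ∀ p q : Fin k, A x (u p) → A (u q) x → (δ : ℕ) ≤ ((q - p : Fin k) : ℕ)) :
    ∃ m : ℕ, 3 ≤ m ∧ m ≤ k ∧
      ∃ φ : Fin (m + 1) → V, Function.Injective φ ∧
        ((∀ p q : Fin (m + 1), H1Arc m ((p : ℕ) + 1) ((q : ℕ) + 1) ↔ A (φ p) (φ q)) ∨
         (∀ p q : Fin (m + 1), H2Arc m ((p : ℕ) + 1) ((q : ℕ) + 1) ↔ A (φ p) (φ q)) ∨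
         (∀ p q : Fin (m + 1), H2Arc m ((p : ℕ) + 1) ((q : ℕ) + 1) ↔ A (φ q) (φ p))) := by
  have e0 : (0 : Fin k) = ⟨0, by omega⟩ := Fin.ext (by rw [Fin.val_zero])
  have hindN : ∀ i j : Fin k, A (u i) (u j) ↔
      (((i:ℕ) + 1 = k ∧ (j:ℕ) = 0) ∨ ((j:ℕ) = (i:ℕ) + 1)) :=
    fun i j => (hind i j).trans (fin_succ_iff (by omega) i j)
  have harc : ∀ (a b : ℕ) (ha : a < k) (hb : b < k),
      A (u ⟨a, ha⟩) (u ⟨b, hb⟩) ↔ ((a + 1 = k ∧ b = 0) ∨ (b = a + 1)) :=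
    fun a b ha hb => hindN ⟨a, ha⟩ ⟨b, hb⟩
  have f4 : ∀ (a : ℕ) (ha : a < k), a = 0 → A x (u ⟨a, ha⟩) := by
    intro a ha h0
    have he : (⟨a, ha⟩ : Fin k) = 0 := by rw [e0]; exact Fin.ext h0
    rw [he]; exact hx0
  obtain ⟨d, hdlt⟩ := δ
  simp only [vmk] at hδ1 hmin hxδ
  have f1 : ∀ (a : ℕ) (ha : a < k), A (u ⟨a, ha⟩) x → d ≤ a := by
    intro a ha h
    have h' := hmin 0 ⟨a, ha⟩ hx0 h
    rwa [sub_zero, vmk] at h'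
  have f2 : ∀ (a : ℕ) (ha : a < k), a ≤ d → A x (u ⟨a, ha⟩) → a = 0 := by
    intro a ha hle h
    have h' := hmin ⟨a, ha⟩ ⟨d, hdlt⟩ h hxδ
    rw [fin_sub_val_le ⟨d, hdlt⟩ ⟨a, ha⟩ hle] at h'
    simp only [vmk] at h'
    omega
  have f3 : ∀ (a : ℕ) (ha : a < k), a = d → A (u ⟨a, ha⟩) x := by
    intro a ha h; subst h; exact hxδ
  by_cases hcase : d = k - 1
  · -- m = k : H1(k) with the whole cycle
    refine ⟨k, hk, le_refl k, ?_⟩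
    obtain ⟨φ, hφinj, hφ⟩ := gen_H1 A k hk u x huinj hux hind
      (f4 0 (by omega) rfl)
      (f3 (k - 1) (by omega) (by omega))
      (by
        intro i hi0 h
        have hlt := i.isLt
        exact hi0 (f2 (i : ℕ) i.isLt (by omega) h))
      (by
        intro i hik h
        have hlt := i.isLt
        have hge := f1 (i : ℕ) i.isLt h
        omega)
      (hirr x)
    exact ⟨φ, hφinj, Or.inl hφ⟩
  · -- d ≤ k - 2
    have hdk2 : d ≤ k - 2 := by omega
    haveI : NeZero (d + 2) := ⟨by omega⟩
    refine ⟨d + 2, by omega, by omega, ?_⟩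
    set z : Fin (d + 2) → V :=
      fun j => if h : (j : ℕ) < d + 1 then u ⟨(j : ℕ), by omega⟩ else x with hzdef
    have hz_lt : ∀ (j : Fin (d + 2)) (hj : (j : ℕ) < d + 1), z j = u ⟨(j : ℕ), by omega⟩ := by
      intro j hj; simp only [hzdef]; rw [dif_pos hj]
    have hz_last : ∀ (j : Fin (d + 2)), ¬ (j : ℕ) < d + 1 → z j = x := by
      intro j hj; simp only [hzdef]; rw [dif_neg hj]
    have hzinj : Function.Injective z := by
      intro a b hab
      have ha := a.isLt; have hb := b.isLt
      by_cases h1' : (a : ℕ) < d + 1 <;> by_cases h2' : (b : ℕ) < d + 1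
      · rw [hz_lt a h1', hz_lt b h2'] at hab
        have h3' := congrArg Fin.val (huinj hab)
        exact Fin.ext h3'
      · rw [hz_lt a h1', hz_last b h2'] at hab
        exact absurd hab (hux _)
      · rw [hz_last a h1', hz_lt b h2'] at hab
        exact absurd hab.symm (hux _)
      · exact Fin.ext (by omega)
    have hzcyc : ∀ i j : Fin (d + 2), A (z i) (z j) ↔ j = i + 1 := by
      intro i j
      have hi := i.isLt; have hj := j.isLt
      rw [fin_succ_iff (show 2 ≤ d + 2 by omega)]
      by_cases h1' : (i : ℕ) < d + 1 <;> by_cases h2' : (j : ℕ) < d + 1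
      · rw [hz_lt i h1', hz_lt j h2', harc]
        omega
      · rw [hz_lt i h1', hz_last j h2']
        constructor
        · intro h; have := f1 _ _ h; omega
        · intro h; exact f3 _ _ (by omega)
      · rw [hz_last i h1', hz_lt j h2']
        constructor
        · intro h; have := f2 _ _ (by omega) h; omega
        · intro h; exact f4 _ _ (by omega)
      · rw [hz_last i h1', hz_last j h2']
        constructor
        · intro h; exact absurd h (hirr x)
        · intro h; exfalso; omega
    -- value computation for subtraction by one in Fin (d+2)
    have hone : ((1 : Fin (d + 2)) : ℕ) = 1 := by
      rw [Fin.val_one' (d + 2), Nat.mod_eq_of_lt (by omega)]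
    have hv1 : ∀ j : Fin (d + 2), 1 ≤ (j : ℕ) → ((j - 1 : Fin (d + 2)) : ℕ) = (j : ℕ) - 1 := by
      intro j hj
      rw [fin_sub_val_le j 1 (by rw [hone]; omega), hone]
    have hv0 : ∀ j : Fin (d + 2), (j : ℕ) = 0 → ((j - 1 : Fin (d + 2)) : ℕ) = d + 1 := by
      intro j hj
      rw [fin_sub_val_lt j 1 (by rw [hone]; omega), hone]
      omega
    -- the vertex u (k-1), neighbor of u 0 on the big cycle
    have hw0 : A (u ⟨k - 1, by omega⟩) (u ⟨0, by omega⟩) := by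
      rw [harc]; omega
    have hadj : A (u ⟨k - 1, by omega⟩) x ∨ A x (u ⟨k - 1, by omega⟩) :=
      hloc_in (u ⟨0, by omega⟩) (u ⟨k - 1, by omega⟩) x (hux _) hw0 (f4 0 (by omega) rfl)
    -- value equations
    have hvs : ∀ i : Fin (d + 2), ((i - 1 : Fin (d + 2)) : ℕ) = (if (i : ℕ) = 0 then d + 1 else (i : ℕ) - 1) := by
      intro i
      by_cases h0 : (i : ℕ) = 0
      · rw [hv0 i h0, if_pos h0]
      · rw [hv1 i (by omega), if_neg h0]
    have hvc : ∀ i : Fin (d + 2),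
        (((⟨d + 1, by omega⟩ : Fin (d + 2)) - i : Fin (d + 2)) : ℕ) = d + 1 - (i : ℕ) := by
      intro i
      have hj := i.isLt
      rw [fin_sub_val_le ⟨d + 1, by omega⟩ i (by show (i : ℕ) ≤ d + 1; omega)]
    -- generic facts about the shifted cycle zs j = z (j - 1)
    have hzs_ne : ∀ (w : Fin k), d < (w : ℕ) → ∀ (i : Fin (d + 2)), z (i - 1) ≠ u w := by
      intro w hwd i he
      have hi := i.isLt
      have hv := hvs i
      by_cases h0 : (i : ℕ) = 0
      · rw [if_pos h0] at hv
        rw [hz_last _ (by omega)] at he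
        exact (hux w) he.symm
      · rw [if_neg h0] at hv
        rw [hz_lt _ (by omega)] at he
        have h2' := congrArg Fin.val (huinj he)
        simp only [vmk] at h2'
        have hw := w.isLt
        omega
    have hzs_inj : Function.Injective (fun j : Fin (d + 2) => z (j - 1)) := by
      intro a b hab
      dsimp only at hab
      exact sub_left_inj.mp (hzinj hab)
    have hzs_cyc : ∀ i j : Fin (d + 2), A (z (i - 1)) (z (j - 1)) ↔ j = i + 1 := by
      intro i j; rw [hzcyc, aux2]
    have hzs0 : z ((⟨0, by omega⟩ : Fin (d + 2)) - 1) = x := by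
      have hv := hv0 ⟨0, by omega⟩ rfl
      rw [hz_last _ (by omega)]
    have hzs1 : z ((⟨1, by omega⟩ : Fin (d + 2)) - 1) = u ⟨0, by omega⟩ := by
      have hv := hv1 ⟨1, by omega⟩ (le_refl 1)
      simp only [vmk] at hv
      rw [hz_lt _ (by omega)]
      congr 1
      exact Fin.ext (by simp only [vmk]; omega)
    have hzslast : z ((⟨d + 2 - 1, by omega⟩ : Fin (d + 2)) - 1) = u ⟨d, by omega⟩ := by
      have hv := hv1 ⟨d + 2 - 1, by omega⟩ (by show (1:ℕ) ≤ d + 2 - 1; omega)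
      simp only [vmk] at hv
      rw [hz_lt _ (by omega)]
      congr 1
      exact Fin.ext (by simp only [vmk]; omega)
    -- generic facts about the reversed cycle zr j = z (⟨d+1⟩ - j)
    have hzr_ne : ∀ (w : Fin k), d < (w : ℕ) → ∀ (i : Fin (d + 2)),
        z ((⟨d + 1, by omega⟩ : Fin (d + 2)) - i) ≠ u w := by
      intro w hwd i he
      have hi := i.isLt
      have hv := hvc i
      by_cases h0 : (i : ℕ) = 0
      · rw [hz_last _ (by omega)] at he
        exact (hux w) he.symm
      · rw [hz_lt _ (by omega)] at he
        have h2' := congrArg Fin.val (huinj he)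
        simp only [vmk] at h2'
        have hw := w.isLt
        omega
    have hzr_inj : Function.Injective
        (fun j : Fin (d + 2) => z ((⟨d + 1, by omega⟩ : Fin (d + 2)) - j)) := by
      intro a b hab
      dsimp only at hab
      exact sub_right_inj.mp (hzinj hab)
    have hzr0 : z ((⟨d + 1, by omega⟩ : Fin (d + 2)) - ⟨0, by omega⟩) = x := by
      have hv := hvc ⟨0, by omega⟩
      simp only [vmk] at hv
      rw [hz_last _ (by omega)]
    have hzr1 : z ((⟨d + 1, by omega⟩ : Fin (d + 2)) - ⟨1, by omega⟩) = u ⟨d, by omega⟩ := by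
      have hv := hvc ⟨1, by omega⟩
      simp only [vmk] at hv
      rw [hz_lt _ (by omega)]
      congr 1
      exact Fin.ext (by simp only [vmk]; omega)
    have hzrlast : z ((⟨d + 1, by omega⟩ : Fin (d + 2)) - ⟨d + 2 - 1, by omega⟩)
        = u ⟨0, by omega⟩ := by
      have hv := hvc ⟨d + 2 - 1, by omega⟩
      simp only [vmk] at hv
      rw [hz_lt _ (by omega)]
      congr 1
      exact Fin.ext (by simp only [vmk]; omega)
    by_cases hd2c : d = k - 2
    · rcases hadj with hBA | hAB
      · -- u(k-1) → x : H2 pattern with cycle starting at x, extra vertex u(k-1)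
        obtain ⟨φ, hφinj, hφ⟩ := gen_H2 A (d + 2) (by omega)
          (fun j => z (j - 1)) (u ⟨k - 1, by omega⟩)
          hzs_inj
          (fun i => hzs_ne _ (by show d < k - 1; omega) i)
          (fun i j => hzs_cyc i j)
          (by (try dsimp only); rw [hzs0]; exact hBA)
          (by (try dsimp only); rw [hzs1]; rw [harc]; (try simp only [vmk, eq_self_iff_true, and_true, true_and, or_true, true_or]); (try omega))
          (by (try dsimp only); rw [hzslast]; rw [harc]; (try simp only [vmk, eq_self_iff_true, and_true, true_and, or_true, true_or]); (try omega))
          (by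
            intro i h0 h1' h
            (try dsimp only at h)
            have hi := i.isLt
            have hv := hvs i
            rw [if_neg h0] at hv
            rw [hz_lt _ (by omega)] at h
            rw [harc] at h
            omega)
          (by
            intro i hne h
            (try dsimp only at h)
            have hi := i.isLt
            have hv := hvs i
            by_cases h0 : (i : ℕ) = 0
            · rw [if_pos h0] at hv
              rw [hz_last _ (by omega)] at h
              exact hasym _ _ hBA h
            · rw [if_neg h0] at hv
              rw [hz_lt _ (by omega)] at h
              rw [harc] at h
              omega)
          (hirr _)
        exact ⟨φ, hφinj, Or.inr (Or.inl hφ)⟩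
      · -- x → u(k-1) : converse H2 pattern on the reversed cycle
        obtain ⟨φ, hφinj, hφ⟩ := gen_H2 (fun a b => A b a) (d + 2) (by omega)
          (fun j => z ((⟨d + 1, by omega⟩ : Fin (d + 2)) - j)) (u ⟨k - 1, by omega⟩)
          hzr_inj
          (fun i => hzr_ne _ (by show d < k - 1; omega) i)
          (by
            intro i j
            (try dsimp only)
            rw [hzcyc, aux1])
          (by (try dsimp only); rw [hzr0]; exact hAB)
          (by (try dsimp only); rw [hzr1]; rw [harc]; (try simp only [vmk, eq_self_iff_true, and_true, true_and, or_true, true_or]); (try omega))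
          (by (try dsimp only); rw [hzrlast]; rw [harc]; (try simp only [vmk, eq_self_iff_true, and_true, true_and, or_true, true_or]); (try omega))
          (by
            intro i h0 h1' h
            (try dsimp only at h)
            have hi := i.isLt
            have hv := hvc i
            rw [hz_lt _ (by omega)] at h
            rw [harc] at h
            omega)
          (by
            intro i hne h
            (try dsimp only at h)
            have hi := i.isLt
            have hv := hvc i
            by_cases h0 : (i : ℕ) = 0
            · rw [hz_last _ (by omega)] at h
              exact hasym _ _ hAB h
            · rw [hz_lt _ (by omega)] at h
              rw [harc] at h
              omega)
          (hirr _)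
        exact ⟨φ, hφinj, Or.inr (Or.inr hφ)⟩
    · -- d ≤ k - 3
      have hdk3 : d ≤ k - 3 := by omega
      rcases hadj with hBA | hAB
      · -- u(k-1) → x : then u(d+1) → x ; H1 with cycle starting at x, extra vertex u(d+1)
        have hnxr : ¬ A x (u ⟨d + 1, by omega⟩) := by
          intro h
          have hne : u ⟨0, by omega⟩ ≠ u ⟨d + 1, by omega⟩ := by
            intro he
            have h2' := congrArg Fin.val (huinj he)
            simp only [vmk] at h2'
            omega
          rcases hloc_out x (u ⟨0, by omega⟩) (u ⟨d + 1, by omega⟩) hne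
            (f4 0 (by omega) rfl) h with h' | h'
          · rw [harc] at h'; omega
          · rw [harc] at h'; omega
        have hrx : A (u ⟨d + 1, by omega⟩) x := by
          rcases hloc_out (u ⟨d, by omega⟩) (u ⟨d + 1, by omega⟩) x (hux _)
            (by rw [harc]; omega) (f3 d (by omega) rfl) with h | h
          · exact h
          · exact absurd h hnxr
        obtain ⟨φ, hφinj, hφ⟩ := gen_H1 A (d + 2) (by omega)
          (fun j => z (j - 1)) (u ⟨d + 1, by omega⟩)
          hzs_inj
          (fun i => hzs_ne _ (by show d < d + 1; omega) i)
          (fun i j => hzs_cyc i j)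
          (by (try dsimp only); rw [hzs0]; exact hrx)
          (by (try dsimp only); rw [hzslast]; rw [harc]; (try simp only [vmk, eq_self_iff_true, and_true, true_and, or_true, true_or]); (try omega))
          (by
            intro i h0 h
            (try dsimp only at h)
            have hi := i.isLt
            have hv := hvs i
            rw [if_neg h0] at hv
            rw [hz_lt _ (by omega)] at h
            rw [harc] at h
            omega)
          (by
            intro i hne h
            (try dsimp only at h)
            have hi := i.isLt
            have hv := hvs i
            by_cases h0 : (i : ℕ) = 0
            · rw [if_pos h0] at hv
              rw [hz_last _ (by omega)] at h
              exact hnxr h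
            · rw [if_neg h0] at hv
              rw [hz_lt _ (by omega)] at h
              rw [harc] at h
              omega)
          (hirr _)
        exact ⟨φ, hφinj, Or.inl hφ⟩
      · -- x → u(k-1) : H1 with the cycle z itself, extra vertex u(k-1)
        obtain ⟨φ, hφinj, hφ⟩ := gen_H1 A (d + 2) (by omega)
          z (u ⟨k - 1, by omega⟩)
          hzinj
          (by
            intro i he
            have hi := i.isLt
            by_cases h0 : (i : ℕ) < d + 1
            · rw [hz_lt i h0] at he
              have h2' := congrArg Fin.val (huinj he)
              simp only [vmk] at h2'
              omega
            · rw [hz_last i h0] at he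
              exact (hux _) he.symm)
          hzcyc
          (by
            rw [hz_lt _ (by show (0:ℕ) < d + 1; omega)]
            rw [harc]; (try simp only [vmk, eq_self_iff_true, and_true, true_and, or_true, true_or]); (try omega))
          (by
            rw [hz_last _ (by show ¬ (d + 2 - 1 : ℕ) < d + 1; omega)]
            exact hAB)
          (by
            intro i h0 h
            have hi := i.isLt
            by_cases hlt : (i : ℕ) < d + 1
            · rw [hz_lt i hlt] at h
              rw [harc] at h
              omega
            · rw [hz_last i hlt] at h
              exact hasym _ _ hAB h)
          (by
            intro i hne h
            have hi := i.isLt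
            rw [hz_lt i (by omega)] at h
            rw [harc] at h
            omega)
          (hirr _)
        exact ⟨φ, hφinj, Or.inl hφ⟩

end

/-- If a locally semicomplete digraph `H` without symmetric arcs has an
induced directed cycle `v_1 → … → v_k → v_1` (`k ≥ 3`) and a vertex `x` off the cycle
with `v_1 → x` and not `v_k → x`, then `H` has an induced subdigraph isomorphic to
`H1(m)`, `H2(m)`, or the converse of `H2(m)` for some `3 ≤ m ≤ k`. -/
theorem stmt_15 {V : Type} [Fintype V] (A : V → V → Prop)
    (hirr : ∀ v, ¬ A v v)
    (hloc_out : ∀ x y z : V, y ≠ z → A x y → A x z → (A y z ∨ A z y))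
    (hloc_in : ∀ x y z : V, y ≠ z → A y x → A z x → (A y z ∨ A z y))
    (hasym : ∀ p q : V, A p q → ¬ A q p)
    (k : ℕ) [NeZero k] (hk : 3 ≤ k) (v : Fin k → V) (hinj : Function.Injective v)
    (hinduced : ∀ i j : Fin k, A (v i) (v j) ↔ j = i + 1)
    (x : V) (hx : ∀ i : Fin k, v i ≠ x)
    (h1 : A (v 0) x) (h2 : ¬ A (v ⟨k - 1, by omega⟩) x) :
    ∃ m : ℕ, 3 ≤ m ∧ m ≤ k ∧
      ∃ φ : Fin (m + 1) → V, Function.Injective φ ∧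
        ((∀ p q : Fin (m + 1), H1Arc m ((p : ℕ) + 1) ((q : ℕ) + 1) ↔ A (φ p) (φ q)) ∨
         (∀ p q : Fin (m + 1), H2Arc m ((p : ℕ) + 1) ((q : ℕ) + 1) ↔ A (φ p) (φ q)) ∨
         (∀ p q : Fin (m + 1), H2Arc m ((p : ℕ) + 1) ((q : ℕ) + 1) ↔ A (φ q) (φ p))) := by
  classical
  -- Step 1: the vertex a with maximal index dominating x; then x → v (a+1)
  set S : Finset (Fin k) := Finset.univ.filter (fun i => A (v i) x) with hS
  have hS0 : (0 : Fin k) ∈ S := by simp [hS, h1]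
  have hSne : S.Nonempty := ⟨0, hS0⟩
  set a := S.max' hSne with ha
  have haA : A (v a) x := by
    have := S.max'_mem hSne
    rw [← ha] at this
    simpa [hS] using this
  have hak : (a : ℕ) ≤ k - 2 := by
    by_contra hcon
    have hlt := a.isLt
    have he : a = ⟨k - 1, by omega⟩ := Fin.ext (by simp only [vmk]; omega)
    exact h2 (he ▸ haA)
  have ha1 : ((a + 1 : Fin k) : ℕ) = (a : ℕ) + 1 := by
    rw [Fin.add_def, Fin.val_one' k, Nat.mod_eq_of_lt (show 1 < k by omega)]
    show ((a : ℕ) + 1) % k = _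
    rw [Nat.mod_eq_of_lt (by omega)]
  have hxa1 : A x (v (a + 1)) := by
    have hne : v (a + 1) ≠ x := hx _
    have harc : A (v a) (v (a + 1)) := (hinduced a (a + 1)).mpr rfl
    rcases hloc_out (v a) (v (a + 1)) x hne harc haA with h | h
    · exfalso
      have hmem : a + 1 ∈ S := by simp [hS, h]
      have hle := S.le_max' (a + 1) hmem
      rw [← ha] at hle
      have hle' : ((a + 1 : Fin k) : ℕ) ≤ (a : ℕ) := hle
      omega
    · exact h
  -- Step 2: choose a pair (s, t) with x → v s, v t → x minimizing the cyclic gap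
  have hpair : ∃ n : ℕ, ∃ p q : Fin k, A x (v p) ∧ A (v q) x ∧ ((q - p : Fin k) : ℕ) = n :=
    ⟨_, a + 1, a, hxa1, haA, rfl⟩
  obtain ⟨s, t, hs, ht, hst⟩ := Nat.find_spec hpair
  have hminN : ∀ p q : Fin k, A x (v p) → A (v q) x → Nat.find hpair ≤ ((q - p : Fin k) : ℕ) :=
    fun p q hp hq => Nat.find_min' hpair ⟨p, q, hp, hq, rfl⟩
  -- Step 3: rotate the cycle to start at s and apply the core lemma
  set u : Fin k → V := fun c => v (s + c) with hu
  have huinj : Function.Injective u := by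
    intro c1 c2 h
    have := hinj h
    exact add_left_cancel this
  have huind : ∀ i j : Fin k, A (u i) (u j) ↔ j = i + 1 := by
    intro i j
    simp only [hu]
    rw [hinduced (s + i) (s + j), add_assoc]
    exact ⟨fun h => add_left_cancel h, fun h => by rw [h]⟩
  have hux : ∀ i : Fin k, u i ≠ x := fun i => hx _
  have hu0 : u 0 = v s := by simp only [hu]; rw [add_zero]
  have huδ : u (t - s) = v t := by simp only [hu]; rw [add_sub_cancel]
  have hx0' : A x (u 0) := by rw [hu0]; exact hs
  have hxδ' : A (u (t - s)) x := by rw [huδ]; exact ht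
  have hδ1 : 1 ≤ ((t - s : Fin k) : ℕ) := by
    rcases Nat.eq_zero_or_pos ((t - s : Fin k) : ℕ) with h0 | h0
    · exfalso
      have hz : (t - s : Fin k) = 0 := Fin.ext (by rw [h0, Fin.val_zero])
      have hts : t = s := sub_eq_zero.mp hz
      exact hasym _ _ hs (hts ▸ ht)
    · exact h0
  have hmin' : ∀ p q : Fin k, A x (u p) → A (u q) x →
      ((t - s : Fin k) : ℕ) ≤ ((q - p : Fin k) : ℕ) := by
    intro p q hp hq
    have h' := hminN (s + p) (s + q) hp hq
    rw [add_sub_add_left_eq_sub] at h'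
    omega
  exact core A hirr hloc_out hloc_in hasym k hk u huinj huind x hux (t - s) hδ1 hx0' hxδ' hmin'
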